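/- Let w=i_n⋯i_1 be a reverse lattice word and σ=std(w). Then T_w = P(σ^{-1}), the insertion tableau of σ^{-1} under the variant Robinson–Schensted algorithm. -/

import Mathlib

open scoped BigOperators

namespace CompJdt

/-! ### Compositions, partitions, diagrams -/

/-- A (strong) composition: a list of positive integers. -/
def IsComposition (α : List ℕ) : Prop := ∀ x ∈ α, 0 < x

/-- A partition, recorded bottom row first (French convention):
weakly decreasing list of positive integers. -/
def IsPartition (lam : List ℕ) : Prop := (∀ x ∈ lam, 0 < x) ∧ lam.Pairwise (· ≥ ·)

/-- Box `(r, c)` (1-based row and column) belongs to the diagram of `α`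
(row `r` has `α r` boxes). For reverse composition diagrams rows are counted
from the top; for partition diagrams (French convention) from the bottom. -/
abbrev InD (α : List ℕ) (r c : ℕ) : Prop := 1 ≤ r ∧ 1 ≤ c ∧ c ≤ α.getD (r - 1) 0

/-- Box `(r,c)` lies in the inner shape `β` of the skew reverse composition shape
`δ // β` (`β` drawn in the bottom-left corner of `δ`). -/
abbrev InInnerC (δ β : List ℕ) (r c : ℕ) : Prop :=
  δ.length - β.length < r ∧ 1 ≤ c ∧ c ≤ β.getD (r - (δ.length - β.length) - 1) 0

/-- Box of the skew reverse composition shape `δ // β`. -/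
abbrev InSkewC (δ β : List ℕ) (r c : ℕ) : Prop := InD δ r c ∧ ¬ InInnerC δ β r c

/-- Box of the skew partition shape `lam / mu` (French convention). -/
abbrev InSkewP (lam mu : List ℕ) (r c : ℕ) : Prop := InD lam r c ∧ ¬ InD mu r c

/-- There is an addable node in column `c` of the partition obtained by sorting `l`. -/
abbrev HasAddable (l : List ℕ) (c : ℕ) : Prop := c = 1 ∨ (c - 1) ∈ l

/-! ### Tableaux as fillings (zero outside the shape) -/

/-- Semistandard reverse composition tableau of skew shape `δ // β`:
rows weakly decrease left to right, first-column entries strictly increase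
top to bottom, triple rule. -/
def IsSSRCTSkew (δ β : List ℕ) (τ : ℕ → ℕ → ℕ) : Prop :=
  (∀ r c, ¬ InSkewC δ β r c → τ r c = 0) ∧
  (∀ r c, InSkewC δ β r c → 0 < τ r c) ∧
  (∀ r c, 1 ≤ c → InSkewC δ β r c → InSkewC δ β r (c+1) → τ r (c+1) ≤ τ r c) ∧
  (∀ r r', InSkewC δ β r 1 → InSkewC δ β r' 1 → r < r' → τ r 1 < τ r' 1) ∧
  (∀ i j k, 1 ≤ k → i < j → InSkewC δ β j (k+1) →
     (InInnerC δ β i k ∨ (InSkewC δ β i k ∧ τ j (k+1) ≤ τ i k)) →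
     (InInnerC δ β i (k+1) ∨ (InSkewC δ β i (k+1) ∧ τ j (k+1) < τ i (k+1))))

def IsSSRCT (α : List ℕ) (τ : ℕ → ℕ → ℕ) : Prop := IsSSRCTSkew α [] τ

/-- Standard reverse composition tableau of skew shape: a semistandard one whose
entries are a bijection onto `{1, …, |δ| - |β|}`. -/
def IsSRCTSkew (δ β : List ℕ) (τ : ℕ → ℕ → ℕ) : Prop :=
  IsSSRCTSkew δ β τ ∧
  (∀ r c, InSkewC δ β r c → τ r c ≤ δ.sum - β.sum) ∧
  (∀ r c r' c', InSkewC δ β r c → InSkewC δ β r' c' → τ r c = τ r' c' → (r, c) = (r', c')) ∧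
  (∀ m, 1 ≤ m → m ≤ δ.sum - β.sum → ∃ r c, InSkewC δ β r c ∧ τ r c = m)

def IsSRCT (α : List ℕ) (τ : ℕ → ℕ → ℕ) : Prop := IsSRCTSkew α [] τ

/-- Semistandard reverse tableau of skew partition shape (French convention):
rows weakly decrease left to right, columns strictly decrease bottom to top. -/
def IsSSRTSkew (lam mu : List ℕ) (T : ℕ → ℕ → ℕ) : Prop :=
  (∀ r c, ¬ InSkewP lam mu r c → T r c = 0) ∧
  (∀ r c, InSkewP lam mu r c → 0 < T r c) ∧
  (∀ r c, 1 ≤ c → InSkewP lam mu r c → InSkewP lam mu r (c+1) → T r (c+1) ≤ T r c) ∧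
  (∀ r c, 1 ≤ r → InSkewP lam mu r c → InSkewP lam mu (r+1) c → T (r+1) c < T r c)

def IsSSRT (lam : List ℕ) (T : ℕ → ℕ → ℕ) : Prop := IsSSRTSkew lam [] T

def IsSRTSkew (lam mu : List ℕ) (T : ℕ → ℕ → ℕ) : Prop :=
  IsSSRTSkew lam mu T ∧
  (∀ r c, InSkewP lam mu r c → T r c ≤ lam.sum - mu.sum) ∧
  (∀ r c r' c', InSkewP lam mu r c → InSkewP lam mu r' c' → T r c = T r' c' → (r, c) = (r', c')) ∧
  (∀ m, 1 ≤ m → m ≤ lam.sum - mu.sum → ∃ r c, InSkewP lam mu r c ∧ T r c = m)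

def IsSRT (lam : List ℕ) (T : ℕ → ℕ → ℕ) : Prop := IsSRTSkew lam [] T

/-! ### Operators on compositions -/

/-- Box removing operator `d_i`: subtract 1 from the rightmost part equal to `i`
(omit it if it becomes 0); undefined (`none`) if there is no such part. -/
def boxRemove (i : ℕ) : List ℕ → Option (List ℕ)
  | [] => none
  | a :: s =>
    match boxRemove i s with
    | some s' => some (a :: s')
    | none => if a = i then some (if i = 1 then s else (i - 1) :: s) else none

/-- `vSeq k = d_1 ∘ d_2 ∘ ⋯ ∘ d_k` (apply `d_k` first). -/
def vSeq : ℕ → List ℕ → Option (List ℕ)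
  | 0, α => some α
  | k+1, α => (boxRemove (k+1) α).bind (vSeq k)

/-- Jeu de taquin operator `u_i = a_i ∘ d_1 ∘ d_2 ∘ ⋯ ∘ d_{i-1}`. -/
def uOp (i : ℕ) (α : List ℕ) : Option (List ℕ) := (vSeq (i - 1) α).map (· ++ [i])

/-- Apply `u_{i_1}, …, u_{i_n}` in order (`l = [i_1, …, i_n]`), each application
required to be defined. -/
def uSeq (l : List ℕ) (α : List ℕ) : Option (List ℕ) :=
  l.foldl (fun o i => o.bind (uOp i)) (some α)

/-- Cover relation of the poset `R_c`. -/
def CoverR (γ δ : List ℕ) : Prop := ∃ i, 0 < i ∧ uOp i γ = some δ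

/-- Cover relation `β ⋖_c α` of the reverse composition poset `L_c`. -/
def CoverC (β α : List ℕ) : Prop :=
  α = 1 :: β ∨ ∃ k, k < β.length ∧ α = β.set k (β.getD k 0 + 1) ∧
    ∀ i < k, β.getD i 0 ≠ β.getD k 0

/-! ### Noncommutative symmetric functions -/

/-- The algebra `NSym` of noncommutative symmetric functions: the free associative
`ℚ`-algebra on generators `h_1, h_2, …` (generator `i` is `h_i`). -/
abbrev NSym := FreeAlgebra ℚ ℕ

/-- `h_α = h_{α_1} ⋯ h_{α_k}`. -/
def hFun (α : List ℕ) : NSym := (α.map (FreeAlgebra.ι ℚ)).prod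

/-- `α ⪰ β`: `α` is obtained by adding together adjacent parts of `β` in order. -/
def Coarsens (α β : List ℕ) : Prop :=
  ∃ L : List (List ℕ), (∀ l ∈ L, l ≠ []) ∧ L.flatten = β ∧ L.map List.sum = α

/-- Noncommutative ribbon Schur function `R_β`. -/
noncomputable def Ribbon (β : List ℕ) : NSym :=
  ∑ᶠ α ∈ {α : List ℕ | Coarsens α β}, ((-1 : ℚ) ^ (β.length - α.length)) • hFun α

/-- `m` is a descent of the SRCT `τ` (of shape `α`): `m+1` lies weakly right of `m`. -/
def IsDescent (α : List ℕ) (τ : ℕ → ℕ → ℕ) (m : ℕ) : Prop :=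
  ∃ r c r' c', InD α r c ∧ InD α r' c' ∧ τ r c = m ∧ τ r' c' = m + 1 ∧ c ≤ c'

/-- The descent composition of `τ` is `β`, i.e. the descent set of `τ` equals
`set(β) = {β_1, β_1+β_2, …}`. -/
def HasDescentComp (α β : List ℕ) (τ : ℕ → ℕ → ℕ) : Prop :=
  ∀ m, IsDescent α τ m ↔ ∃ k, 1 ≤ k ∧ k < β.length ∧ (β.take k).sum = m

/-- `d_{αβ}`: the number of SRCTs of shape `α` with descent composition `β`. -/
noncomputable def dCount (α β : List ℕ) : ℕ :=
  Nat.card {τ : ℕ → ℕ → ℕ // IsSRCT α τ ∧ HasDescentComp α β τ}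

/-! ### words, standardization, variant Robinson–Schensted -/

/-- Reverse lattice word: in every suffix, `j+1` occurs at most as often as `j`. -/
def ReverseLattice (w : List ℕ) : Prop :=
  (∀ x ∈ w, 0 < x) ∧ ∀ s ∈ w.tails, ∀ j : ℕ, s.count (j + 2) ≤ s.count (j + 1)

/-- Standardization of a word (read left to right), in one-line notation. -/
def stdList (w : List ℕ) : List ℕ :=
  (List.range w.length).map (fun p =>
    (w.filter (fun x => decide (x < w.getD p 0))).length +
    ((w.take (p + 1)).filter (fun x => decide (x = w.getD p 0))).length)

/-- Inverse of a permutation given in one-line notation. -/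
def invList (σ : List ℕ) : List ℕ :=
  (List.range σ.length).map (fun k => σ.idxOf (k + 1) + 1)

/-- Row insertion for reverse tableaux: `y` replaces (and bumps) the greatest
entry smaller than `y`, or is appended at the end of the row. -/
def insertRow (y : ℕ) : List ℕ → List ℕ × Option ℕ
  | [] => ([y], none)
  | a :: s =>
    if a < y then (y :: s, some a)
    else
      let p := insertRow y s
      (a :: p.1, p.2)

/-- Insert `y` into a reverse tableau (rows listed bottom to top); returns the new
tableau and the (1-based) index of the row where a new box was created. -/
def insertT (y : ℕ) : List (List ℕ) → List (List ℕ) × ℕ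
  | [] => ([[y]], 1)
  | row :: rest =>
    match insertRow y row with
    | (row', none) => (row' :: rest, 1)
    | (row', some b) =>
      let p := insertT b rest
      (row' :: p.1, p.2 + 1)

/-- Append the value `v` at the end of row `r` of a tableau. -/
def addEntryAt (r v : ℕ) (Q : List (List ℕ)) : List (List ℕ) :=
  if r ≤ Q.length then Q.set (r - 1) (Q.getD (r - 1) [] ++ [v]) else Q ++ [[v]]

/-- Variant Robinson–Schensted: insert the values in order; the `i`-th insertion
records `n - i + 1` in the recording tableau. -/
def RSaux : List ℕ → ℕ → List (List ℕ) × List (List ℕ) → List (List ℕ) × List (List ℕ)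
  | [], _, pq => pq
  | y :: rest, v, (P, Q) =>
    let p := insertT y P
    RSaux rest (v - 1) (p.1, addEntryAt p.2 v Q)

/-- Insertion tableau `P(σ)` of the variant Robinson–Schensted algorithm. -/
def PTab (σ : List ℕ) : List (List ℕ) := (RSaux σ σ.length ([], [])).1

/-- Recording tableau `Q(σ)` of the variant Robinson–Schensted algorithm. -/
def QTab (σ : List ℕ) : List (List ℕ) := (RSaux σ σ.length ([], [])).2

/-- Add a box (with value `v`) at the addable node in column `i` of a tableau
given by its rows (bottom to top). -/
def addBoxCol (i v : ℕ) : List (List ℕ) → List (List ℕ)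
  | [] => [[v]]
  | row :: rest =>
    if row.length + 1 = i then (row ++ [v]) :: rest else row :: addBoxCol i v rest

/-- The SRT `T_w` associated with a reverse lattice word `w = i_n ⋯ i_1` (read left
to right): the box added at step `k` (in column `i_k`) receives entry `n - k + 1`. -/
def TwTab (w : List ℕ) : List (List ℕ) :=
  (List.range w.length).foldl
    (fun t k => addBoxCol (w.reverse.getD k 0) (w.length - k) t) []

/-- Column `c` of a tableau given by its list of rows (bottom to top). -/
def colA (t : List (List ℕ)) (c : ℕ) : List ℕ := t.filterMap (fun row => row[c - 1]?)

/-- Column reading word: entries of each column in increasing order, columns left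
to right. -/
def colWordL (t : List (List ℕ)) : List ℕ :=
  ((List.range ((t.map List.length).foldr max 0)).map
    (fun c0 => (colA t (c0 + 1)).insertionSort (· ≤ ·))).flatten

/-- The filling function of a tableau given by its list of rows. -/
def tabFun (t : List (List ℕ)) (r c : ℕ) : ℕ := (t.getD (r - 1) []).getD (c - 1) 0

/-- The shape of a tableau given by its list of rows. -/
def tabShape (t : List (List ℕ)) : List ℕ := t.map List.length

/-- Column reading word of a filling with row lengths bounded by the shape `δ`:
positive entries of each column in increasing order, columns left to right. -/
def colWordF (δ : List ℕ) (τ : ℕ → ℕ → ℕ) : List ℕ :=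
  ((List.range (δ.foldr max 0)).map (fun c0 =>
    (((List.range δ.length).map (fun r0 => τ (r0 + 1) (c0 + 1))).filter
        (fun v => decide (0 < v))).insertionSort (· ≤ ·))).flatten

/-! ### Backward jeu de taquin slides on (skew) SSRT -/

/-- `(r, c)` is an addable node of the partition `mu`. -/
abbrev AddableAt (mu : List ℕ) (r c : ℕ) : Prop :=
  1 ≤ r ∧ c = mu.getD (r - 1) 0 + 1 ∧ (r = 1 ∨ c ≤ mu.getD (r - 2) 0)

/-- One step of a backward slide: the empty box at `c` is filled from the smaller
of the entries below and to the left (below on a tie). -/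
def slideStepB (lam mu : List ℕ) (T : ℕ → ℕ → ℕ) (c : ℕ × ℕ) : ℕ × ℕ :=
  if InSkewP lam mu (c.1 - 1) c.2 then
    if InSkewP lam mu c.1 (c.2 - 1) then
      if T (c.1 - 1) c.2 ≤ T c.1 (c.2 - 1) then (c.1 - 1, c.2) else (c.1, c.2 - 1)
    else (c.1 - 1, c.2)
  else (c.1, c.2 - 1)

/-- Backward slide loop; also records (in a list) the entries that move
horizontally.  Returns (new filling, final empty box, horizontal entries). -/
def bSlideAux (lam mu : List ℕ) :
    ℕ → (ℕ → ℕ → ℕ) → ℕ × ℕ → List ℕ → (ℕ → ℕ → ℕ) × (ℕ × ℕ) × List ℕ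
  | 0, T, c, H => (T, c, H)
  | fuel+1, T, c, H =>
    if AddableAt mu c.1 c.2 then ((fun r cc => if (r, cc) = c then 0 else T r cc), c, H)
    else
      let c' := slideStepB lam mu T c
      bSlideAux lam mu fuel
        (fun r cc => if (r, cc) = c then T c'.1 c'.2 else T r cc) c'
        (if c'.1 = c.1 then T c'.1 c'.2 :: H else H)

/-- Backward jeu de taquin slide `jdt_{j₀}` starting at the addable node of `lam`
in column `j₀`, for a filling of the skew shape `lam / mu`. Returns the new
filling, the box added to the inner shape, and the multiset (as a list) of
entries that moved horizontally. -/
def jdtB (lam mu : List ℕ) (j0 : ℕ) (T : ℕ → ℕ → ℕ) :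
    (ℕ → ℕ → ℕ) × (ℕ × ℕ) × List ℕ :=
  bSlideAux lam mu (lam.length + j0 + 2) T
    (lam.countP (fun p => decide (j0 ≤ p)) + 1, j0) []

/-- Add a box at the addable node of the partition `lam` in column `c`. -/
def addBoxP (lam : List ℕ) (c : ℕ) : List ℕ :=
  let r := lam.countP (fun p => decide (c ≤ p))
  if r < lam.length then lam.set r (lam.getD r 0 + 1) else lam ++ [1]

/-- Add a box to the partition `mu` at the end of row `r`. -/
def addBoxRow (mu : List ℕ) (r : ℕ) : List ℕ :=
  if r ≤ mu.length then mu.set (r - 1) (mu.getD (r - 1) 0 + 1) else mu ++ [1]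

/-- Iterate backward jdt slides `jdt_{j}` (columns taken from the list in order),
tracking outer shape, inner shape and filling. -/
def jdtIter : List ℕ → List ℕ × List ℕ × (ℕ → ℕ → ℕ) → List ℕ × List ℕ × (ℕ → ℕ → ℕ)
  | [], s => s
  | j :: rest, (lam, mu, T) =>
    let res := jdtB lam mu j T
    jdtIter rest (addBoxP lam j, addBoxRow mu res.2.1.1, res.1)

/-- Validity of a sequence of slide columns on a partition: at each step, the
current outer shape has an addable node in the required column. -/
def ValidSeqP : List ℕ → List ℕ → Prop
  | [], _ => True
  | j :: rest, lam => 0 < j ∧ HasAddable lam j ∧ ValidSeqP rest (addBoxP lam j)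

/-! ### `f`, `tjdt` -/

/-- The row of `f_{i+1}(T)`: the largest row `r` with `T r i < T (r-1) (i+1)`
(with the convention `T 0 s = ∞`, i.e. boxes absent above count as `∞`). -/
def fRow (lam : List ℕ) (T : ℕ → ℕ → ℕ) (i : ℕ) : ℕ :=
  ((List.range (lam.length + 1)).filter (fun r =>
    decide (InD lam r i ∧ (¬ InD lam (r - 1) (i + 1) ∨ T r i < T (r - 1) (i + 1))))).foldr
    max 0

/-- `tjdt_{i+1}(T)`: delete the entry `f_{i+1}(T)` from column `i` and slide every
entry of column `i` above it down one row. -/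
def tjdtFun (lam : List ℕ) (T : ℕ → ℕ → ℕ) (i : ℕ) : ℕ → ℕ → ℕ :=
  fun p q => if q = i ∧ fRow lam T i ≤ p then T (p + 1) q else T p q

/-- The shape of `tjdt_{i+1}(T)`: remove the topmost box of column `i`. -/
def tjdtShape (lam : List ℕ) (i : ℕ) : List ℕ :=
  let m := lam.countP (fun p => decide (i ≤ p))
  (lam.set (m - 1) (lam.getD (m - 1) 0 - 1)).filter (fun x => decide (x ≠ 0))

/-! ### `φ`, `Φ`, `μ` on SSRCT -/

/-- The index `r₁`: the bottommost (largest index) row of `α` of size `i`. -/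
def r1? (α : List ℕ) (i : ℕ) : Option ℕ :=
  let l := (List.range (α.length + 1)).filter (fun r => decide (1 ≤ r ∧ α.getD (r - 1) 0 = i))
  if l = [] then none else some (l.foldr max 0)

/-- Next index: the greatest `r < rp` with `τ r i > τ rp i ≥ τ r (i+1)`. -/
def nextR (τ : ℕ → ℕ → ℕ) (i rp : ℕ) : Option ℕ :=
  let l := (List.range rp).filter (fun r =>
    decide (1 ≤ r ∧ τ rp i < τ r i ∧ τ r (i + 1) ≤ τ rp i))
  if l = [] then none else some (l.foldr max 0)

def rChainAux (τ : ℕ → ℕ → ℕ) (i : ℕ) : ℕ → ℕ → List ℕ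
  | 0, r => [r]
  | fuel+1, r =>
    match nextR τ i r with
    | none => [r]
    | some r' => r :: rChainAux τ i fuel r'

/-- The list `[r₁, …, r_k]` used by `φ_{i+1}`. -/
def rChain (α : List ℕ) (τ : ℕ → ℕ → ℕ) (i : ℕ) : List ℕ :=
  match r1? α i with
  | none => []
  | some r1 => rChainAux τ i r1 r1

/-- The filling `φ_{i+1}(τ)`: entry of box `(r_j, i)` is replaced by that of box
`(r_{j-1}, i)` (so `τ (r_k) i` exits), and box `(r₁, i)` is removed. -/
def phiFun (α : List ℕ) (τ : ℕ → ℕ → ℕ) (i : ℕ) : ℕ → ℕ → ℕ :=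
  fun r c =>
    let rs := rChain α τ i
    if c = i ∧ r ∈ rs then
      (if rs.idxOf r = 0 then 0 else τ (rs.getD (rs.idxOf r - 1) 0) i)
    else τ r c

/-- The entry that exits the tableau when applying `φ_{i+1}`. -/
def exitEnt (α : List ℕ) (τ : ℕ → ℕ → ℕ) (i : ℕ) : ℕ :=
  match (rChain α τ i).getLast? with
  | some rk => τ rk i
  | none => 0

/-- `Φ_{m+1} = φ_2 ∘ φ_3 ∘ ⋯ ∘ φ_{m+1}` together with shape and the list of
exited entries: `PhiAux m (α, τ, [])` computes `Φ_{m+1}(τ)`. -/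
def PhiAux : ℕ → List ℕ × (ℕ → ℕ → ℕ) × List ℕ → List ℕ × (ℕ → ℕ → ℕ) × List ℕ
  | 0, s => s
  | m+1, (α, τ, H) =>
    PhiAux m ((boxRemove (m+1) α).getD α, phiFun α τ (m+1), exitEnt α τ (m+1) :: H)

/-- The largest entry of a filling of shape `α`. -/
def maxEnt (α : List ℕ) (τ : ℕ → ℕ → ℕ) : ℕ :=
  ((List.range α.length).map (fun r0 =>
    ((List.range (α.getD r0 0)).map (fun c0 => τ (r0 + 1) (c0 + 1))).foldr max 0)).foldr max 0

/-- Backward jeu de taquin slide `μ_i` on a straight-shape SSRCT `τ` of shape `α`: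
compute `Φ_i(τ)` (of shape `γ`), then add a bottom row of length `i` whose first
box is the inner box `(1)` and whose remaining boxes carry the exited entries in
decreasing order.  Returns the outer shape `(γ, i)` and the filling (zero on the
inner box). -/
def muFun (α : List ℕ) (τ : ℕ → ℕ → ℕ) (i : ℕ) : List ℕ × (ℕ → ℕ → ℕ) :=
  let res := PhiAux (i - 1) (α, τ, [])
  let γ := res.1
  let τ' := res.2.1
  let Hs := res.2.2.insertionSort (· ≥ ·)
  (γ ++ [i], fun r c =>
    if r = γ.length + 1 then (if 2 ≤ c ∧ c ≤ i then Hs.getD (c - 2) 0 else 0)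
    else τ' r c)

/-- `μ_i` with the convention that the vacated bottom-left corner is filled with a
new largest entry `max(τ) + 1`, so the result is again of straight shape. -/
def muFunMax (α : List ℕ) (τ : ℕ → ℕ → ℕ) (i : ℕ) : List ℕ × (ℕ → ℕ → ℕ) :=
  let res := PhiAux (i - 1) (α, τ, [])
  let γ := res.1
  let τ' := res.2.1
  let Hs := res.2.2.insertionSort (· ≥ ·)
  (γ ++ [i], fun r c =>
    if r = γ.length + 1 then
      (if c = 1 then maxEnt α τ + 1 else if 2 ≤ c ∧ c ≤ i then Hs.getD (c - 2) 0 else 0)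
    else τ' r c)

/-- Apply `μ_{i_1}, …, μ_{i_n}` (under the `max + 1` convention) to the empty SSRCT. -/
def muSeqMax (l : List ℕ) : List ℕ × (ℕ → ℕ → ℕ) :=
  l.foldl (fun p i => muFunMax p.1 p.2 i) ([], fun _ _ => 0)

/-- The canonical tableau `τ_α`: the `r`-th row from the top contains
`1 + Σ_{i<r} α_i, …, Σ_{i≤r} α_i` written right to left. -/
def canonTab (α : List ℕ) (r c : ℕ) : ℕ :=
  if InD α r c then (α.take r).sum + 1 - c else 0

/-- The inner shape of a skew filling: row lengths of the zero region inside `δ`. -/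
def innerOf (δ : List ℕ) (τ : ℕ → ℕ → ℕ) : List ℕ :=
  ((List.range δ.length).map (fun r0 =>
    ((List.range (δ.getD r0 0)).filter (fun c0 => decide (τ (r0 + 1) (c0 + 1) = 0))).length)).filter
    (fun x => decide (x ≠ 0))

/-- `μ_i` on a skew SSRCT (outer shape `δ`, inner boxes the zero region): complete
the inner shape with entries strictly larger than every entry, apply `μ_i`, and
retain only the original entries. -/
def muSkew (δ : List ℕ) (τ : ℕ → ℕ → ℕ) (i : ℕ) : List ℕ × (ℕ → ℕ → ℕ) :=
  let β := innerOf δ τ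
  let M := maxEnt δ τ
  let off := δ.length - β.length
  let full : ℕ → ℕ → ℕ := fun r c =>
    if InD δ r c ∧ τ r c = 0 then M + canonTab β (r - off) c else τ r c
  let res := muFun δ full i
  (res.1, fun r c => if M < res.2 r c then 0 else res.2 r c)

/-- Iterate `μ` slides on a (possibly skew) SSRCT. -/
def muIterSkew : List ℕ → List ℕ × (ℕ → ℕ → ℕ) → List ℕ × (ℕ → ℕ → ℕ)
  | [], p => p
  | j :: rest, (δ, τ) => muIterSkew rest (muSkew δ τ j)

/-- Validity of a sequence of `μ` slides on a composition: at each step the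
sorted outer shape has an addable node in the required column. -/
def ValidSeqU : List ℕ → List ℕ → Prop
  | [], _ => True
  | j :: rest, γ => 0 < j ∧ HasAddable γ j ∧ ValidSeqU rest ((uOp j γ).getD γ)

/-! ### Forward slides and evacuation -/

/-- One step of a forward slide: the empty box is filled from the larger of the
entries above and to the right (above on a tie). -/
def fStep (lam : List ℕ) (T : ℕ → ℕ → ℕ) (c : ℕ × ℕ) : ℕ × ℕ :=
  if InD lam (c.1 + 1) c.2 then
    if InD lam c.1 (c.2 + 1) then
      if T c.1 (c.2 + 1) ≤ T (c.1 + 1) c.2 then (c.1 + 1, c.2) else (c.1, c.2 + 1)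
    else (c.1 + 1, c.2)
  else (c.1, c.2 + 1)

/-- Forward slide loop; returns the final filling and the vacated box. -/
def fSlideAux (lam : List ℕ) :
    ℕ → (ℕ → ℕ → ℕ) → ℕ × ℕ → (ℕ → ℕ → ℕ) × (ℕ × ℕ)
  | 0, T, c => (T, c)
  | fuel+1, T, c =>
    if InD lam (c.1 + 1) c.2 ∨ InD lam c.1 (c.2 + 1) then
      let c' := fStep lam T c
      fSlideAux lam fuel (fun r cc => if (r, cc) = c then T c'.1 c'.2 else T r cc) c'
    else ((fun r cc => if (r, cc) = c then 0 else T r cc), c)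

/-- Remove a box from row `r` of the partition `lam`. -/
def removeAtRow (r : ℕ) (lam : List ℕ) : List ℕ :=
  (lam.set (r - 1) (lam.getD (r - 1) 0 - 1)).filter (fun x => decide (x ≠ 0))

/-- Evacuation loop: repeatedly delete the entry `a` at `(1,1)`, forward-slide,
and record `n - a + 1` at the vacated removable node. -/
def evacAux (n : ℕ) : ℕ → List ℕ → (ℕ → ℕ → ℕ) → (ℕ → ℕ → ℕ) → (ℕ → ℕ → ℕ)
  | 0, _, _, U => U
  | steps+1, lam, T, U =>
    let a := T 1 1
    let res := fSlideAux lam (lam.length + lam.sum + 2)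
      (fun r c => if (r, c) = (1, 1) then 0 else T r c) (1, 1)
    evacAux n steps (removeAtRow res.2.1 lam) res.1
      (fun r c => if (r, c) = res.2 then n - a + 1 else U r c)

/-- Evacuation `e(T)` of a standard reverse tableau of shape `lam ⊢ n`. -/
def evac (n : ℕ) (lam : List ℕ) (T : ℕ → ℕ → ℕ) : ℕ → ℕ → ℕ :=
  evacAux n n lam T (fun _ _ => 0)

/-! ### Chains and Littlewood–Richardson coefficients -/

/-- Number of maximal chains from `α` to `β` in the poset `R_c`. -/
noncomputable def chainCount (α β : List ℕ) : ℕ :=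
  Nat.card {c : List (List ℕ) // c.Chain' CoverR ∧ c.head? = some α ∧ c.getLast? = some β}

/-- A skew SRCT of shape `δ // β` rectifies to the canonical tableau `τ_α`, i.e.
`ρ⁻¹(P(w_τ)) = τ_α` (expressed via matching column multisets). -/
def RectifiesToCanon (δ β α : List ℕ) (τ : ℕ → ℕ → ℕ) : Prop :=
  ∀ c v, 0 < v →
    Nat.card {r : ℕ // InD α r c ∧ canonTab α r c = v} =
      (colA (PTab (colWordF δ τ)) c).count v

/-- The noncommutative Littlewood–Richardson coefficient `C^β_{αγ}`: the number of
SRCTs of shape `β // γ` that rectify to the canonical tableau `τ_α`. -/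
noncomputable def Ccoef (α γ β : List ℕ) : ℕ :=
  Nat.card {τ : ℕ → ℕ → ℕ //
    Relation.TransGen CoverC γ β ∧ IsSRCTSkew β γ τ ∧ RectifiesToCanon β γ α τ}

end CompJdt

namespace CompJdt



/-- positions (1-based) of letter c in w, increasing. -/
def posL (c : ℕ) : List ℕ → List ℕ
  | [] => []
  | a :: w => if a = c then 1 :: (posL c w).map (· + 1) else (posL c w).map (· + 1)

lemma getD_map_succ (l : List ℕ) (j : ℕ) (h : j < l.length) :
    (l.map (· + 1)).getD j 0 = l.getD j 0 + 1 := by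
  induction l generalizing j with
  | nil => simp at h
  | cons a t ih =>
    cases j with
    | zero => simp [List.getD]
    | succ j => simpa using ih j (by simpa using h)

lemma getD_range_map {α : Type*} (f : ℕ → α) (n i : ℕ) (d : α) :
    ((List.range n).map f).getD i d = if i < n then f i else d := by
  split
  · rw [List.getD_eq_getElem _ _ (by simpa using ‹i < n›)]
    simp
  · rw [List.getD_eq_default]
    simpa using Nat.le_of_not_lt ‹¬ i < n›

lemma length_posL (c : ℕ) (w : List ℕ) : (posL c w).length = w.count c := by
  induction w with
  | nil => simp [posL]
  | cons a t ih =>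
    by_cases h : a = c
    · simp [posL, h, ih, List.count_cons]
    · simp [posL, h, ih, List.count_cons]

lemma posL_pos (c : ℕ) (w : List ℕ) : ∀ x ∈ posL c w, 1 ≤ x := by
  induction w with
  | nil => simp [posL]
  | cons a t ih =>
    intro x hx
    by_cases h : a = c <;> simp [posL, h] at hx
    · rcases hx with h1 | ⟨y, hy, rfl⟩
      · omega
      · omega
    · rcases hx with ⟨y, hy, rfl⟩; omega

lemma posL_le (c : ℕ) (w : List ℕ) : ∀ x ∈ posL c w, x ≤ w.length := by
  induction w with
  | nil => simp [posL]
  | cons a t ih =>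
    intro x hx
    by_cases h : a = c <;> simp [posL, h] at hx
    · rcases hx with h1 | ⟨y, hy, rfl⟩
      · simp [h1]
      · have := ih y hy; simp; omega
    · rcases hx with ⟨y, hy, rfl⟩; have := ih y hy; simp; omega

lemma posL_letter (c : ℕ) (w : List ℕ) : ∀ p ∈ posL c w, w.getD (p - 1) 0 = c := by
  induction w with
  | nil => simp [posL]
  | cons a t ih =>
    intro p hp
    by_cases h : a = c <;> simp [posL, h] at hp
    · rcases hp with h1 | ⟨y, hy, rfl⟩
      · simp [h1, h]
      · have h1 := posL_pos c t y hy
        obtain ⟨z, rfl⟩ : ∃ z, y = z + 1 := ⟨y - 1, by omega⟩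
        have := ih _ hy
        simpa [Nat.add_sub_cancel, List.getD] using this
    · rcases hp with ⟨y, hy, rfl⟩
      have h1 := posL_pos c t y hy
      obtain ⟨z, rfl⟩ : ∃ z, y = z + 1 := ⟨y - 1, by omega⟩
      have := ih _ hy
      simpa [Nat.add_sub_cancel, List.getD] using this

lemma posL_chain (c : ℕ) (w : List ℕ) : (posL c w).Chain' (· < ·) := by
  induction w with
  | nil => simp [posL, List.Chain']
  | cons a t ih =>
    have hmap : ((posL c t).map (· + 1)).Chain' (· < ·) := by
      apply List.isChain_map_of_isChain (· + 1) _ ih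
      intro x y h
      exact Nat.add_lt_add_right h 1
    by_cases h : a = c <;> simp only [posL, h, if_true, if_false, reduceIte]
    · apply List.isChain_cons.2
      refine ⟨?_, hmap⟩
      intro y hy
      have : y ∈ (posL c t).map (· + 1) := List.mem_of_mem_head? hy
      simp at this
      rcases this with ⟨z, hz, rfl⟩
      have := posL_pos c t z hz
      omega
    · exact hmap

/-- Key indexing lemma relating `posL` and counts in prefixes. -/
lemma posL_getD_le_iff (c : ℕ) (w : List ℕ) (j : ℕ) (hj : j < w.count c) (p : ℕ) :
    (posL c w).getD j 0 ≤ p ↔ j + 1 ≤ (w.take p).count c := by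
  induction w generalizing j p with
  | nil => simp at hj
  | cons a t ih =>
    cases p with
    | zero =>
      simp only [List.take_zero, List.count_nil]
      constructor
      · intro h
        have hmem : (posL c (a :: t)).getD j 0 ∈ posL c (a :: t) := by
          rw [List.getD_eq_getElem _ _ (by rw [length_posL]; exact hj)]
          exact List.getElem_mem _
        have := posL_pos c (a :: t) _ hmem
        omega
      · omega
    | succ p =>
      by_cases h : a = c
      · subst h
        simp only [posL, if_true, reduceIte]
        cases j with
        | zero =>
          simp only [List.getD_cons_zero, List.take_succ_cons, List.count_cons_self]
          constructor <;> intro <;> omega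
        | succ j =>
          have hj' : j < t.count a := by
            have := List.count_cons_self (a := a) (l := t); omega
          rw [List.getD_cons_succ, getD_map_succ _ _ (by rw [length_posL]; exact hj')]
          simp only [List.take_succ_cons, List.count_cons_self]
          rw [show (posL a t).getD j 0 + 1 ≤ p + 1 ↔ (posL a t).getD j 0 ≤ p by omega]
          rw [ih j hj' p]
          omega
      · simp only [posL, h, if_false, reduceIte]
        have hj' : j < t.count c := by
          have : (a :: t).count c = t.count c := by
            rw [List.count_cons]; simp [h]
          omega
        rw [getD_map_succ _ _ (by rw [length_posL]; exact hj')]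
        simp only [List.take_succ_cons]
        rw [show (posL c t).getD j 0 + 1 ≤ p + 1 ↔ (posL c t).getD j 0 ≤ p by omega]
        rw [ih j hj' p, List.count_cons]
        simp [h]



lemma count_take_succ (w : List ℕ) (p : ℕ) (c : ℕ) (hp : p < w.length) :
    (w.take (p + 1)).count c = (w.take p).count c + (if w.getD p 0 = c then 1 else 0) := by
  induction w generalizing p with
  | nil => simp at hp
  | cons a t ih =>
    cases p with
    | zero => simp [List.count_cons, List.getD]
    | succ p =>
      simp only [List.take_succ_cons, List.count_cons, List.getD_cons_succ]
      rw [ih p (by simpa using hp)]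
      omega

lemma count_take_mono (w : List ℕ) (c : ℕ) {p q : ℕ} (h : p ≤ q) :
    (w.take p).count c ≤ (w.take q).count c := by
  have : w.take p = (w.take q).take p := by rw [List.take_take, Nat.min_eq_left h]
  rw [this]
  exact (List.take_sublist _ _).count_le c

lemma count_take_le (w : List ℕ) (c p : ℕ) : (w.take p).count c ≤ w.count c :=
  (List.take_sublist _ _).count_le c

lemma count_drop (w : List ℕ) (c p : ℕ) :
    (w.drop p).count c = w.count c - (w.take p).count c := by
  have h := List.take_append_drop p w
  have : (w.take p).count c + (w.drop p).count c = w.count c := by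
    rw [← List.count_append, h]
  omega

lemma rl_tail {a : ℕ} {w : List ℕ} (h : ReverseLattice (a :: w)) : ReverseLattice w := by
  constructor
  · intro x hx; exact h.1 x (List.mem_cons_of_mem a hx)
  · intro s hs
    apply h.2
    rw [List.tails_cons]
    exact List.mem_cons_of_mem _ hs

lemma rl_suffix_counts {w : List ℕ} (hw : ReverseLattice w) {s : List ℕ} (hs : s ∈ w.tails)
    {b c : ℕ} (hb : 1 ≤ b) (hbc : b ≤ c) : s.count c ≤ s.count b := by
  obtain ⟨d, rfl⟩ : ∃ d, c = b + d := ⟨c - b, by omega⟩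
  clear hbc
  induction d with
  | zero => simp
  | succ d ih =>
    have h1 := hw.2 s hs (b + d - 1)
    have h2 : b + d - 1 + 2 = b + (d + 1) := by omega
    have h3 : b + d - 1 + 1 = b + d := by omega
    rw [h2, h3] at h1
    omega

lemma rl_counts_dec {w : List ℕ} (hw : ReverseLattice w) {b c : ℕ} (hb : 1 ≤ b) (hbc : b ≤ c) :
    w.count c ≤ w.count b := by
  exact rl_suffix_counts hw ((List.mem_tails _ _).2 (List.suffix_refl w)) hb hbc

/-- The core lattice inequality: the `s`-th (from left) occurrence of `c` lies strictly
left of the `r`-th-from-right occurrence of `b`, whenever `b < c`, `s + r ≤ count c + 1`. -/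
lemma core_lt {w : List ℕ} (hw : ReverseLattice w) {b c r s : ℕ}
    (hb : 1 ≤ b) (hbc : b < c) (hr : 1 ≤ r) (hs : 1 ≤ s)
    (hrs : s + r ≤ w.count c + 1) (hrb : r ≤ w.count b) :
    (posL c w).getD (s - 1) 0 < (posL b w).getD (w.count b - r) 0 := by
  set p := (posL c w).getD (s - 1) 0 with hp
  have hsc : s - 1 < w.count c := by omega
  have hpmem : p ∈ posL c w := by
    rw [hp, List.getD_eq_getElem _ _ (by rw [length_posL]; exact hsc)]
    exact List.getElem_mem _
  have hp1 : 1 ≤ p := posL_pos c w p hpmem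
  have hplen : p ≤ w.length := posL_le c w p hpmem
  have hletter : w.getD (p - 1) 0 = c := posL_letter c w p hpmem
  -- count of c in take (p-1) ≤ s - 1
  have htake : (w.take (p - 1)).count c ≤ s - 1 := by
    by_contra hcon
    have : s - 1 + 1 ≤ (w.take (p - 1)).count c := by omega
    have := (posL_getD_le_iff c w (s - 1) hsc (p - 1)).2 this
    omega
  -- count of c in drop (p-1) ≥ r
  have hdropc : r ≤ (w.drop (p - 1)).count c := by
    rw [count_drop]
    have := count_take_le w c (p - 1)
    omega
  -- lattice on suffix
  have hdropb : r ≤ (w.drop (p - 1)).count b := by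
    have := rl_suffix_counts hw (s := w.drop (p - 1))
      ((List.mem_tails _ _).2 (List.drop_suffix _ _)) hb (le_of_lt hbc)
    omega
  -- position p itself carries letter c ≠ b
  have hdrop_eq : w.drop (p - 1) = c :: w.drop p := by
    have h1 : p - 1 < w.length := by omega
    rw [List.drop_eq_getElem_cons h1]
    congr 1
    · rw [← hletter, List.getD_eq_getElem _ _ h1]
    · congr 1; omega
  have hdropb' : r ≤ (w.drop p).count b := by
    rw [hdrop_eq, List.count_cons, if_neg (by simp; omega)] at hdropb
    omega
  -- count of b in take p ≤ count b - r
  have htakeb : (w.take p).count b ≤ w.count b - r := by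
    have := count_drop w b p
    have := count_take_le w b p
    omega
  -- conclude
  by_contra hcon
  have hle : (posL b w).getD (w.count b - r) 0 ≤ p := by omega
  have := (posL_getD_le_iff b w (w.count b - r) (by omega) p).1 hle
  omega

lemma countP_interval_succ (w : List ℕ) (m : ℕ) :
    w.countP (fun x => decide (1 ≤ x ∧ x ≤ m + 1)) =
      w.countP (fun x => decide (1 ≤ x ∧ x ≤ m)) + w.count (m + 1) := by
  induction w with
  | nil => simp
  | cons a t ih =>
    simp only [List.countP_cons, List.count_cons, ih]
    by_cases h : a = m + 1
    · subst h
      simp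
      omega
    · have h1 : (a == m + 1) = false := by simp [h]
      have h2 : decide (1 ≤ a ∧ a ≤ m + 1) = decide (1 ≤ a ∧ a ≤ m) := by
        by_cases h3 : 1 ≤ a ∧ a ≤ m
        · simp [h3]; omega
        · simp only [decide_eq_decide]
          omega
      rw [h1, h2]
      simp
      omega

/-- letters of a reverse lattice word are bounded by the length. -/
lemma rl_letter_le {w : List ℕ} (hw : ReverseLattice w) {c : ℕ} (hc : c ∈ w) :
    c ≤ w.length := by
  have hc1 : 1 ≤ c := hw.1 c hc
  have hcount : ∀ b, 1 ≤ b → b ≤ c → 1 ≤ w.count b := by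
    intro b hb hbc
    have := rl_counts_dec hw hb hbc
    have : 0 < w.count c := List.count_pos_iff.2 hc
    omega
  have key : ∀ m, m ≤ c → m ≤ w.countP (fun x => decide (1 ≤ x ∧ x ≤ m)) := by
    intro m
    induction m with
    | zero => simp
    | succ m ih =>
      intro hm
      have h1 := ih (by omega)
      have hsplit := countP_interval_succ w m
      have h2 := hcount (m + 1) (by omega) hm
      omega
  have := key c le_rfl
  have : w.countP (fun x => decide (1 ≤ x ∧ x ≤ c)) ≤ w.length := List.countP_le_length
  omega



/-- number of letters smaller than `c`. -/
def cntLt (c : ℕ) (w : List ℕ) : ℕ := w.countP (fun x => decide (x < c))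

lemma cntLt_succ (c : ℕ) (w : List ℕ) : cntLt (c + 1) w = cntLt c w + w.count c := by
  unfold cntLt
  induction w with
  | nil => simp
  | cons a t ih =>
    simp only [List.countP_cons, List.count_cons, ih]
    by_cases h : a = c
    · subst h; simp; omega
    · have h1 : (a == c) = false := by simp [h]
      have h2 : decide (a < c + 1) = decide (a < c) := by
        simp only [decide_eq_decide]; omega
      rw [h1, h2]; simp; omega

lemma cntLt_one {w : List ℕ} (hpos : ∀ x ∈ w, 0 < x) : cntLt 1 w = 0 := by
  unfold cntLt
  rw [List.countP_eq_zero]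
  intro x hx
  have := hpos x hx
  simp
  omega

lemma cntLt_mono (w : List ℕ) {b c : ℕ} (h : b ≤ c) : cntLt b w ≤ cntLt c w := by
  apply List.countP_mono_left
  intro x hx
  simp only [decide_eq_true_eq]
  omega

lemma posL_getD_strictmono (c : ℕ) (w : List ℕ) {i j : ℕ} (hij : i < j)
    (hj : j < w.count c) : (posL c w).getD i 0 < (posL c w).getD j 0 := by
  have hc := List.isChain_iff_pairwise.1 (posL_chain c w)
  have hj' : j < (posL c w).length := by rw [length_posL]; exact hj
  have hi' : i < (posL c w).length := by omega
  rw [List.getD_eq_getElem _ _ hi', List.getD_eq_getElem _ _ hj']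
  exact List.pairwise_iff_getElem.1 hc i j hi' hj' hij

lemma posL_count_take (c : ℕ) (w : List ℕ) {jj : ℕ} (hjj : jj < w.count c) :
    (w.take ((posL c w).getD jj 0)).count c = jj + 1 := by
  have h1 : jj + 1 ≤ (w.take ((posL c w).getD jj 0)).count c :=
    (posL_getD_le_iff c w jj hjj _).1 le_rfl
  have h2 : (w.take ((posL c w).getD jj 0)).count c ≤ jj + 1 := by
    rcases Nat.lt_or_ge (jj + 1) (w.count c) with h | h
    · by_contra hcon
      have : jj + 1 + 1 ≤ (w.take ((posL c w).getD jj 0)).count c := by omega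
      have := (posL_getD_le_iff c w (jj + 1) h _).2 this
      have := posL_getD_strictmono c w (show jj < jj + 1 by omega) h
      omega
    · have := count_take_le w c ((posL c w).getD jj 0)
      omega
  omega

lemma stdList_getD (w : List ℕ) (q : ℕ) (hq : q < w.length) :
    (stdList w).getD q 0 =
      cntLt (w.getD q 0) w + (w.take (q + 1)).count (w.getD q 0) := by
  unfold stdList
  rw [getD_range_map _ _ _ _, if_pos hq]
  congr 1
  · rw [← List.countP_eq_length_filter]; rfl
  · rw [← List.countP_eq_length_filter]
    rw [List.count_eq_countP]
    apply List.countP_congr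
    intro x hx
    simp

lemma std_at (w : List ℕ) (c jj : ℕ) (hjj : jj < w.count c) :
    (stdList w).getD ((posL c w).getD jj 0 - 1) 0 = cntLt c w + jj + 1 := by
  set p := (posL c w).getD jj 0 with hp
  have hpmem : p ∈ posL c w := by
    rw [hp, List.getD_eq_getElem _ _ (by rw [length_posL]; exact hjj)]
    exact List.getElem_mem _
  have hp1 : 1 ≤ p := posL_pos c w p hpmem
  have hplen : p ≤ w.length := posL_le c w p hpmem
  have hletter : w.getD (p - 1) 0 = c := posL_letter c w p hpmem
  rw [stdList_getD w (p - 1) (by omega), hletter]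
  have : p - 1 + 1 = p := by omega
  rw [this, posL_count_take c w hjj]
  omega

lemma std_ne (w : List ℕ) (c jj : ℕ) (hpos : ∀ x ∈ w, 0 < x) (hjj : jj < w.count c)
    (q : ℕ) (hq : q < (posL c w).getD jj 0 - 1) :
    (stdList w).getD q 0 ≠ cntLt c w + jj + 1 := by
  set p := (posL c w).getD jj 0 with hp
  have hpmem : p ∈ posL c w := by
    rw [hp, List.getD_eq_getElem _ _ (by rw [length_posL]; exact hjj)]
    exact List.getElem_mem _
  have hp1 : 1 ≤ p := posL_pos c w p hpmem
  have hplen : p ≤ w.length := posL_le c w p hpmem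
  have hletterp : w.getD (p - 1) 0 = c := posL_letter c w p hpmem
  have hqlen : q < w.length := by omega
  set b := w.getD q 0 with hb
  have hbmem : b ∈ w := by
    rw [hb, List.getD_eq_getElem _ _ hqlen]
    exact List.getElem_mem _
  have hb1 : 1 ≤ b := hpos b hbmem
  rw [stdList_getD w q hqlen, ← hb]
  have hBq1 : 1 ≤ (w.take (q + 1)).count b := by
    rw [count_take_succ w q b hqlen, ← hb]
    simp
  have hBqle : (w.take (q + 1)).count b ≤ w.count b := count_take_le w b _
  rcases Nat.lt_trichotomy b c with hbc | hbc | hbc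
  · -- b < c : value ≤ cntLt (b+1) ≤ cntLt c < v
    have h1 : cntLt (b + 1) w ≤ cntLt c w := cntLt_mono w (by omega)
    have h2 := cntLt_succ b w
    omega
  · -- b = c : count in take (q+1) ≤ jj
    subst hbc
    have hcount_p : (w.take p).count b = jj + 1 := posL_count_take b w hjj
    have hstep : (w.take p).count b = (w.take (p - 1)).count b + 1 := by
      have h3 : p - 1 + 1 = p := by omega
      have := count_take_succ w (p - 1) b (by omega)
      rw [h3, hletterp] at this
      simpa using this
    have hmono : (w.take (q + 1)).count b ≤ (w.take (p - 1)).count b :=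
      count_take_mono w b (by omega)
    omega
  · -- b > c : value > cntLt (c+1) ≥ v
    have h1 : cntLt (c + 1) w ≤ cntLt b w := cntLt_mono w (by omega)
    have h2 := cntLt_succ c w
    omega

lemma indexOf_eq_of (l : List ℕ) (v p : ℕ) (hp : p < l.length) (hv : l.getD p 0 = v)
    (hlt : ∀ q < p, l.getD q 0 ≠ v) : l.idxOf v = p := by
  induction l generalizing p with
  | nil => simp at hp
  | cons a t ih =>
    cases p with
    | zero =>
      simp only [List.getD_cons_zero] at hv
      rw [List.idxOf_cons, hv]
      simp
    | succ p =>
      have ha : a ≠ v := by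
        have := hlt 0 (by omega)
        simpa using this
      rw [List.idxOf_cons]
      have : (a == v) = false := by simp [ha]
      rw [this]
      simp only [cond_false]
      have := ih p (by simpa using hp) (by simpa using hv)
        (fun q hq => by simpa using hlt (q + 1) (by omega))
      omega

def blocksL (w : List ℕ) (M : ℕ) : List ℕ :=
  ((List.range M).map (fun c0 => posL (c0 + 1) w)).flatten

lemma blocksL_succ (w : List ℕ) (M : ℕ) :
    blocksL w (M + 1) = blocksL w M ++ posL (M + 1) w := by
  unfold blocksL
  rw [List.range_succ, List.map_append, List.flatten_append]
  simp

lemma length_blocksL (w : List ℕ) (M : ℕ) (hpos : ∀ x ∈ w, 0 < x) :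
    (blocksL w M).length = cntLt (M + 1) w := by
  induction M with
  | zero => simp [blocksL, cntLt_one hpos]
  | succ M ih =>
    rw [blocksL_succ, List.length_append, ih, length_posL]
    exact (cntLt_succ (M + 1) w).symm

lemma blocksL_getD (w : List ℕ) (M c0 jj : ℕ) (hpos : ∀ x ∈ w, 0 < x)
    (hc : c0 < M) (hjj : jj < w.count (c0 + 1)) :
    (blocksL w M).getD (cntLt (c0 + 1) w + jj) 0 = (posL (c0 + 1) w).getD jj 0 := by
  induction M with
  | zero => omega
  | succ M ih =>
    rcases Nat.lt_or_ge c0 M with h | h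
    · rw [blocksL_succ, List.getD_append _ _ _ _ (by
        rw [length_blocksL w M hpos]
        have h1 : cntLt (c0 + 1 + 1) w ≤ cntLt (M + 1) w := cntLt_mono w (by omega)
        have h2 := cntLt_succ (c0 + 1) w
        omega)]
      exact ih h
    · have hc0 : c0 = M := by omega
      subst hc0
      rw [blocksL_succ]
      have hlen : (blocksL w c0).length = cntLt (c0 + 1) w := length_blocksL w c0 hpos
      rw [show cntLt (c0 + 1) w + jj = (blocksL w c0).length + jj by omega]
      rw [List.getD_append_right _ _ _ _ (by omega : (blocksL w c0).length ≤ (blocksL w c0).length + jj)]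
      congr 1
      omega

lemma dec_lemma (w : List ℕ) (M i : ℕ) (hpos : ∀ x ∈ w, 0 < x)
    (hiM : i < cntLt (M + 1) w) :
    ∃ c0 < M, ∃ jj < w.count (c0 + 1), i = cntLt (c0 + 1) w + jj := by
  induction M with
  | zero =>
    rw [cntLt_one hpos] at hiM
    omega
  | succ M ihM =>
    rcases Nat.lt_or_ge i (cntLt (M + 1) w) with h | h
    · obtain ⟨c0, hc0, jj, hjj, hdec⟩ := ihM h
      exact ⟨c0, by omega, jj, hjj, hdec⟩
    · refine ⟨M, by omega, i - cntLt (M + 1) w, ?_, by omega⟩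
      have := cntLt_succ (M + 1) w
      omega

lemma invList_stdList (w : List ℕ) (M : ℕ) (hpos : ∀ x ∈ w, 0 < x)
    (hbound : ∀ x ∈ w, x ≤ M) : invList (stdList w) = blocksL w M := by
  have hlen1 : (invList (stdList w)).length = w.length := by
    simp [invList, stdList]
  have hcnt : cntLt (M + 1) w = w.length := by
    unfold cntLt
    rw [List.countP_eq_length]
    intro x hx
    have := hbound x hx
    simp
    omega
  have hlen2 : (blocksL w M).length = w.length := by
    rw [length_blocksL w M hpos, hcnt]
  apply List.ext_getElem (by omega)
  intro i h1 h2
  rw [← List.getD_eq_getElem _ 0 h1, ← List.getD_eq_getElem _ 0 h2]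
  have hi : i < w.length := by omega
  obtain ⟨c0, hc0, jj, hjj, hdec⟩ := dec_lemma w M i hpos (by omega)
  -- LHS
  unfold invList
  rw [getD_range_map _ _ _ _, if_pos (by simpa [stdList] using hi)]
  rw [hdec, blocksL_getD w M c0 jj hpos hc0 hjj]
  have hidx : (stdList w).idxOf (cntLt (c0 + 1) w + jj + 1) =
      (posL (c0 + 1) w).getD jj 0 - 1 := by
    apply indexOf_eq_of
    · have hpm : (posL (c0 + 1) w).getD jj 0 ∈ posL (c0 + 1) w := by
        rw [List.getD_eq_getElem _ _ (by rw [length_posL]; exact hjj)]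
        exact List.getElem_mem _
      have := posL_le (c0 + 1) w _ hpm
      have := posL_pos (c0 + 1) w _ hpm
      simp only [stdList, List.length_map, List.length_range]
      omega
    · exact std_at w (c0 + 1) jj hjj
    · exact fun q hq => std_ne w (c0 + 1) jj hpos hjj q hq
  rw [hidx]
  have hpm : (posL (c0 + 1) w).getD jj 0 ∈ posL (c0 + 1) w := by
    rw [List.getD_eq_getElem _ _ (by rw [length_posL]; exact hjj)]
    exact List.getElem_mem _
  have := posL_pos (c0 + 1) w _ hpm
  omega




def foldIns (l : List ℕ) (P : List (List ℕ)) : List (List ℕ) :=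
  l.foldl (fun P y => (insertT y P).1) P

lemma foldIns_nil (P : List (List ℕ)) : foldIns [] P = P := rfl

lemma foldIns_cons (y : ℕ) (l : List ℕ) (P : List (List ℕ)) :
    foldIns (y :: l) P = foldIns l (insertT y P).1 := rfl

lemma foldIns_append (l1 l2 : List ℕ) (P : List (List ℕ)) :
    foldIns (l1 ++ l2) P = foldIns l2 (foldIns l1 P) := by
  unfold foldIns
  rw [List.foldl_append]

lemma insertRow_append (y : ℕ) (row : List ℕ) (h : ∀ x ∈ row, ¬ x < y) :
    insertRow y row = (row ++ [y], none) := by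
  induction row with
  | nil => simp [insertRow]
  | cons a s ih =>
    have ha : ¬ a < y := h a (by simp)
    simp only [insertRow, if_neg ha]
    rw [ih (fun x hx => h x (by simp [hx]))]
    simp

lemma insertRow_bump (y b : ℕ) (s : List ℕ) (h : ∀ x ∈ s, ¬ x < y) (hb : b < y) :
    insertRow y (s ++ [b]) = (s ++ [y], some b) := by
  induction s with
  | nil => simp [insertRow, hb]
  | cons a s ih =>
    have ha : ¬ a < y := h a (by simp)
    simp only [List.cons_append, insertRow, if_neg ha]
    rw [ih (fun x hx => h x (by simp [hx]))]

def attach : List (List ℕ) → List ℕ → List (List ℕ)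
  | B, [] => B
  | [], x :: e => [x] :: attach [] e
  | b :: B, x :: e => (b ++ [x]) :: attach B e

lemma attach_nil (B : List (List ℕ)) : attach B [] = B := by
  cases B <;> rfl

lemma attach_cons_nil (x : ℕ) (e : List ℕ) : attach [] (x :: e) = [x] :: attach [] e := rfl

lemma attach_cons_cons (b : List ℕ) (B : List (List ℕ)) (x : ℕ) (e : List ℕ) :
    attach (b :: B) (x :: e) = (b ++ [x]) :: attach B e := rfl

/-- The bumping chain lemma. -/
lemma insertT_attach (e : List ℕ) : ∀ (B : List (List ℕ)) (y : ℕ),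
    (y :: e).Chain' (· > ·) →
    (∀ i ≤ e.length, ∀ x ∈ B.getD i [], (y :: e).getD i 0 < x) →
    insertT y (attach B e) = (attach B (y :: e), e.length + 1) := by
  induction e with
  | nil =>
    intro B y _ hrow
    cases B with
    | nil => simp [attach, insertT]
    | cons b B' =>
      rw [attach_nil, attach_cons_cons, attach_nil]
      have hb : ∀ x ∈ b, ¬ x < y := by
        intro x hx
        have := hrow 0 (by simp) x (by simpa using hx)
        simp only [List.getD_cons_zero] at this
        omega
      simp only [insertT, insertRow_append y b hb]
      simp
  | cons x e' ih =>
    intro B y hchain hrow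
    have hxy : x < y := by
      have := hchain.rel_head
      simpa using this
    have hchain' : (x :: e').Chain' (· > ·) := hchain.tail
    cases B with
    | nil =>
      rw [attach_cons_nil, attach_cons_nil]
      have h1 : insertRow y [x] = ([y], some x) := by
        simpa using insertRow_bump y x [] (by simp) hxy
      simp only [insertT, h1]
      rw [ih [] x hchain' (by intro i _ z hz; simp at hz)]
      simp
    | cons b B' =>
      rw [attach_cons_cons, attach_cons_cons]
      have hb : ∀ z ∈ b, ¬ z < y := by
        intro z hz
        have := hrow 0 (by simp) z (by simpa using hz)
        simp only [List.getD_cons_zero] at this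
        omega
      have h1 : insertRow y (b ++ [x]) = (b ++ [y], some x) := insertRow_bump y x b hb hxy
      simp only [insertT, h1]
      rw [ih B' x hchain' (by
        intro i hi z hz
        have := hrow (i + 1) (by simpa using hi) z (by simpa using hz)
        simpa using this)]
      simp

lemma chain'_getD_le (l : List ℕ) (h : l.Chain' (· > ·)) (i j : ℕ) (hij : i ≤ j)
    (hj : j < l.length) : l.getD j 0 ≤ l.getD i 0 := by
  rcases Nat.eq_or_lt_of_le hij with rfl | hlt
  · exact le_rfl
  · have hp := List.isChain_iff_pairwise.1 h
    have hi : i < l.length := by omega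
    rw [List.getD_eq_getElem _ _ hi, List.getD_eq_getElem _ _ hj]
    exact le_of_lt (List.pairwise_iff_getElem.1 hp i j hi hj hlt)

/-- Inserting an increasing run builds up the last column. -/
lemma foldIns_attach : ∀ (q e : List ℕ) (B : List (List ℕ)),
    (q.reverse ++ e).Chain' (· > ·) →
    (∀ i, i < q.length + e.length → ∀ x ∈ B.getD i [], (q.reverse ++ e).getD i 0 < x) →
    foldIns q (attach B e) = attach B (q.reverse ++ e) := by
  intro q
  induction q with
  | nil =>
    intro e B _ _
    simp [foldIns_nil]
  | cons y q' ih =>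
    intro e B hchain hrow
    have hfull : (y :: q').reverse ++ e = q'.reverse ++ (y :: e) := by
      simp
    rw [hfull] at hchain hrow ⊢
    have hlen : (q'.reverse ++ (y :: e)).length = q'.length + e.length + 1 := by
      simp only [List.length_append, List.length_reverse, List.length_cons]
      omega
    have hchain2 : (y :: e).Chain' (· > ·) := (List.isChain_append.1 hchain).2.1
    have hgetD : ∀ i, i ≤ e.length →
        (y :: e).getD i 0 ≤ (q'.reverse ++ (y :: e)).getD i 0 := by
      intro i hi
      have h2 : (q'.reverse ++ (y :: e)).getD (q'.length + i) 0 = (y :: e).getD i 0 := by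
        rw [List.getD_append_right _ _ _ _ (by simp)]
        congr 1
        simp
      rw [← h2]
      exact chain'_getD_le _ hchain i (q'.length + i) (by omega) (by rw [hlen]; omega)
    have hstep : insertT y (attach B e) = (attach B (y :: e), e.length + 1) := by
      apply insertT_attach e B y hchain2
      intro i hi x hx
      have h1 := hrow i (by simp; omega) x hx
      have h2 := hgetD i hi
      omega
    rw [foldIns_cons, hstep]
    have := ih (y :: e) B hchain (by
      intro i hi x hx
      apply hrow i (by simp at hi ⊢; omega) x hx)
    simpa using this

/-! ### The target tableau -/

def colFun (w : List ℕ) (m b0 : ℕ) : ℕ :=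
  (posL (b0 + 1) w).getD ((posL (b0 + 1) w).length - m) 0

def rowB (w : List ℕ) (c m : ℕ) : List ℕ :=
  ((List.range c).filter (fun b0 => decide (m ≤ (posL (b0 + 1) w).length))).map (colFun w m)

def numRows (w : List ℕ) (c : ℕ) : ℕ :=
  ((List.range c).map (fun b0 => w.count (b0 + 1))).foldr max 0

def Btab (w : List ℕ) (c : ℕ) : List (List ℕ) :=
  (List.range (numRows w c)).map (fun m0 => rowB w c (m0 + 1))

lemma foldr_max_snoc (l : List ℕ) (x : ℕ) :
    (l ++ [x]).foldr max 0 = max (l.foldr max 0) x := by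
  induction l with
  | nil => simp [Nat.max_comm]
  | cons a t iht =>
    simp only [List.cons_append, List.foldr_cons, iht]
    omega

lemma numRows_succ (w : List ℕ) (c : ℕ) :
    numRows w (c + 1) = max (numRows w c) (w.count (c + 1)) := by
  unfold numRows
  rw [List.range_succ, List.map_append, List.map_cons, List.map_nil, foldr_max_snoc]

lemma le_numRows (w : List ℕ) {b0 c : ℕ} (h : b0 < c) : w.count (b0 + 1) ≤ numRows w c := by
  induction c with
  | zero => omega
  | succ c ih =>
    rw [numRows_succ]
    rcases Nat.lt_or_ge b0 c with h1 | h1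
    · have := ih h1; omega
    · have : b0 = c := by omega
      subst this; omega

lemma rowB_nil (w : List ℕ) {c m : ℕ} (h : numRows w c < m) : rowB w c m = [] := by
  unfold rowB
  rw [List.filter_eq_nil_iff.2, List.map_nil]
  intro b0 hb0
  simp only [decide_eq_true_eq, length_posL]
  have := le_numRows w (List.mem_range.1 hb0)
  omega

lemma rowB_succ (w : List ℕ) (c m : ℕ) :
    rowB w (c + 1) m = rowB w c m ++
      (if m ≤ w.count (c + 1) then [colFun w m c] else []) := by
  unfold rowB
  rw [List.range_succ, List.filter_append, List.map_append]
  congr 1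
  simp only [List.filter_cons, List.filter_nil, length_posL]
  split
  · simp_all
  · simp_all

lemma attach_length : ∀ (e : List ℕ) (B : List (List ℕ)),
    (attach B e).length = max B.length e.length := by
  intro e
  induction e with
  | nil =>
    intro B
    rw [attach_nil]
    simp only [List.length_nil]
    omega
  | cons x e' ih =>
    intro B
    cases B with
    | nil =>
      rw [attach_cons_nil]
      simp only [List.length_cons, ih, List.length_nil]
      omega
    | cons b B' =>
      rw [attach_cons_cons]
      simp only [List.length_cons, ih]
      omega

lemma attach_getD : ∀ (e : List ℕ) (B : List (List ℕ)) (i : ℕ),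
    (attach B e).getD i [] = B.getD i [] ++ (if i < e.length then [e.getD i 0] else []) := by
  intro e
  induction e with
  | nil =>
    intro B i
    rw [attach_nil]
    simp
  | cons x e' ih =>
    intro B i
    cases B with
    | nil =>
      rw [attach_cons_nil]
      cases i with
      | zero => simp
      | succ i =>
        simp only [List.getD_cons_succ]
        have := ih [] i
        simpa using this
    | cons b B' =>
      rw [attach_cons_cons]
      cases i with
      | zero => simp
      | succ i =>
        simp only [List.getD_cons_succ]
        have := ih B' i
        simpa using this

lemma getD_reverse (l : List ℕ) (i : ℕ) (h : i < l.length) :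
    l.reverse.getD i 0 = l.getD (l.length - 1 - i) 0 := by
  rw [List.getD_eq_getElem _ _ (by simpa using h), List.getD_eq_getElem _ _ (by omega)]
  exact List.getElem_reverse _

lemma Btab_length (w : List ℕ) (c : ℕ) : (Btab w c).length = numRows w c := by
  simp [Btab]

lemma Btab_getD (w : List ℕ) (c i : ℕ) :
    (Btab w c).getD i [] = if i < numRows w c then rowB w c (i + 1) else [] := by
  unfold Btab
  rw [getD_range_map]

lemma attach_Btab (w : List ℕ) (c : ℕ) :
    attach (Btab w c) ((posL (c + 1) w).reverse) = Btab w (c + 1) := by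
  have hlen : (attach (Btab w c) ((posL (c + 1) w).reverse)).length = numRows w (c + 1) := by
    rw [attach_length, Btab_length, List.length_reverse, length_posL, numRows_succ]
  have hlen2 : (Btab w (c + 1)).length = numRows w (c + 1) := Btab_length w (c + 1)
  apply List.ext_getElem (by omega)
  intro i h1 h2
  have hi : i < numRows w (c + 1) := by omega
  have e1 : (attach (Btab w c) ((posL (c + 1) w).reverse))[i] =
      (attach (Btab w c) ((posL (c + 1) w).reverse)).getD i [] := by
    rw [List.getD_eq_getElem _ _ h1]
  have e2 : (Btab w (c + 1))[i] = (Btab w (c + 1)).getD i [] := by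
    rw [List.getD_eq_getElem _ _ h2]
  rw [e1, e2, attach_getD, Btab_getD, Btab_getD, rowB_succ, if_pos hi]
  congr 1
  · split
    · rfl
    · rw [rowB_nil w (by omega)]
  · simp only [List.length_reverse, length_posL]
    by_cases h : i < w.count (c + 1)
    · rw [if_pos h, if_pos (by omega)]
      congr 1
      rw [getD_reverse _ _ (by rw [length_posL]; omega)]
      unfold colFun
      congr 1
      rw [length_posL]
      omega
    · rw [if_neg h, if_neg (by omega)]

lemma block_step {w : List ℕ} (hw : ReverseLattice w) (c : ℕ) :
    foldIns (posL (c + 1) w) (Btab w c) = Btab w (c + 1) := by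
  have h1 : attach (Btab w c) [] = Btab w c := attach_nil _
  have hchain : ((posL (c + 1) w).reverse ++ []).Chain' (· > ·) := by
    rw [List.append_nil, List.Chain', List.isChain_reverse]
    exact posL_chain (c + 1) w
  have hrows : ∀ i, i < (posL (c + 1) w).length + ([] : List ℕ).length →
      ∀ x ∈ (Btab w c).getD i [],
        ((posL (c + 1) w).reverse ++ []).getD i 0 < x := by
    intro i hi x hx
    rw [List.append_nil]
    simp only [List.length_nil, Nat.add_zero, length_posL] at hi
    rw [Btab_getD] at hx
    by_cases hnum : i < numRows w c
    · rw [if_pos hnum] at hx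
      unfold rowB at hx
      simp only [List.mem_map, List.mem_filter, List.mem_range, decide_eq_true_eq,
        length_posL] at hx
      obtain ⟨b0, ⟨hb0c, hb0cnt⟩, rfl⟩ := hx
      have hcore := core_lt hw (b := b0 + 1) (c := c + 1) (r := i + 1)
        (s := w.count (c + 1) - i) (by omega) (by omega) (by omega) (by omega)
        (by omega) hb0cnt
      unfold colFun
      rw [length_posL]
      have hrev : ((posL (c + 1) w).reverse).getD i 0 =
          (posL (c + 1) w).getD (w.count (c + 1) - i - 1) 0 := by
        rw [getD_reverse _ _ (by rw [length_posL]; omega)]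
        congr 1
        rw [length_posL]
        omega
      rw [hrev]
      have heq : w.count (c + 1) - i - 1 = (w.count (c + 1) - i) - 1 := by omega
      rw [heq]
      exact hcore
    · rw [if_neg hnum] at hx
      simp at hx
  have := foldIns_attach (posL (c + 1) w) [] (Btab w c) hchain hrows
  rw [h1] at this
  rw [this, List.append_nil, attach_Btab]

lemma foldIns_blocks {w : List ℕ} (hw : ReverseLattice w) : ∀ c,
    foldIns (blocksL w c) [] = Btab w c := by
  intro c
  induction c with
  | zero => simp [blocksL, Btab, numRows, foldIns_nil]
  | succ c ih =>
    rw [blocksL_succ, foldIns_append, ih, block_step hw c]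







lemma RSaux_fst : ∀ (l : List ℕ) (v : ℕ) (P Q : List (List ℕ)),
    (RSaux l v (P, Q)).1 = foldIns l P := by
  intro l
  induction l with
  | nil => intro v P Q; rfl
  | cons y rest ih =>
    intro v P Q
    rw [show RSaux (y :: rest) v (P, Q) =
      RSaux rest (v - 1) ((insertT y P).1, addEntryAt (insertT y P).2 v Q) from rfl]
    rw [ih, foldIns_cons]

lemma PTab_eq_foldIns (σ : List ℕ) : PTab σ = foldIns σ [] := by
  unfold PTab
  rw [RSaux_fst]

/-! ### `addBoxCol` lemmas -/

lemma addBoxCol_end (i v : ℕ) : ∀ (t : List (List ℕ)), (∀ r ∈ t, r.length + 1 ≠ i) →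
    addBoxCol i v t = t ++ [[v]] := by
  intro t
  induction t with
  | nil => intro _; rfl
  | cons row rest ih =>
    intro h
    rw [show addBoxCol i v (row :: rest) =
      if row.length + 1 = i then (row ++ [v]) :: rest else row :: addBoxCol i v rest from rfl]
    rw [if_neg (h row (by simp)), ih (fun r hr => h r (by simp [hr]))]
    rfl

lemma addBoxCol_mid (i v : ℕ) : ∀ (t1 : List (List ℕ)) (row : List ℕ) (t2 : List (List ℕ)),
    (∀ r ∈ t1, r.length + 1 ≠ i) → row.length + 1 = i →
    addBoxCol i v (t1 ++ row :: t2) = t1 ++ (row ++ [v]) :: t2 := by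
  intro t1
  induction t1 with
  | nil =>
    intro row t2 _ hrow
    rw [show addBoxCol i v (([] : List (List ℕ)) ++ row :: t2) =
      if row.length + 1 = i then (row ++ [v]) :: t2 else row :: addBoxCol i v t2 from rfl]
    rw [if_pos hrow]
    rfl
  | cons r0 t1' ih =>
    intro row t2 h hrow
    rw [show addBoxCol i v ((r0 :: t1') ++ row :: t2) =
      if r0.length + 1 = i then (r0 ++ [v]) :: (t1' ++ row :: t2)
      else r0 :: addBoxCol i v (t1' ++ row :: t2) from rfl]
    rw [if_neg (h r0 (by simp)), ih row t2 (fun r hr => h r (by simp [hr])) hrow]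
    rfl

def incT (t : List (List ℕ)) : List (List ℕ) := t.map (List.map (· + 1))

lemma addBoxCol_incT (i v : ℕ) : ∀ (t : List (List ℕ)),
    addBoxCol i (v + 1) (incT t) = incT (addBoxCol i v t) := by
  intro t
  induction t with
  | nil => rfl
  | cons row rest ih =>
    show addBoxCol i (v + 1) (row.map (· + 1) :: incT rest) = _
    rw [show addBoxCol i (v + 1) (row.map (· + 1) :: incT rest) =
      if (row.map (· + 1)).length + 1 = i then ((row.map (· + 1)) ++ [v + 1]) :: incT rest
      else (row.map (· + 1)) :: addBoxCol i (v + 1) (incT rest) from rfl]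
    rw [show addBoxCol i v (row :: rest) =
      if row.length + 1 = i then (row ++ [v]) :: rest else row :: addBoxCol i v rest from rfl]
    by_cases h : row.length + 1 = i
    · rw [if_pos (by simpa using h), if_pos h]
      simp [incT]
    · rw [if_neg (by simpa using h), if_neg h, ih]
      rfl

lemma TwTab_cons (a : ℕ) (w' : List ℕ) :
    TwTab (a :: w') = addBoxCol a 1 (incT (TwTab w')) := by
  unfold TwTab
  have hlen : (a :: w').length = w'.length + 1 := rfl
  rw [hlen, List.range_succ, List.foldl_append]
  simp only [List.foldl_cons, List.foldl_nil]
  have hgetl : (a :: w').reverse.getD w'.length 0 = a := by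
    rw [show (a :: w').reverse = w'.reverse ++ [a] by simp]
    rw [List.getD_append_right _ _ _ _ (by simp)]
    simp
  rw [hgetl]
  have hv : w'.length + 1 - w'.length = 1 := by omega
  rw [hv]
  congr 1
  have key : ∀ (L : List ℕ), (∀ k ∈ L, k < w'.length) → ∀ (t : List (List ℕ)),
      L.foldl (fun t k => addBoxCol ((a :: w').reverse.getD k 0) (w'.length + 1 - k) t) (incT t)
        = incT (L.foldl (fun t k => addBoxCol (w'.reverse.getD k 0) (w'.length - k) t) t) := by
    intro L
    induction L with
    | nil => intro _ t; rfl
    | cons k L' ihL =>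
      intro hk t
      simp only [List.foldl_cons]
      have h1 : (a :: w').reverse.getD k 0 = w'.reverse.getD k 0 := by
        rw [show (a :: w').reverse = w'.reverse ++ [a] by simp]
        rw [List.getD_append _ _ _ _ (by simp; exact hk k (by simp))]
      have h2 : w'.length + 1 - k = (w'.length - k) + 1 := by
        have := hk k (by simp)
        omega
      rw [h1, h2, addBoxCol_incT]
      exact ihL (fun k' hk' => hk k' (by simp [hk'])) _
  have := key (List.range w'.length) (fun k hk => List.mem_range.1 hk) []
  simpa [incT] using this

/-! ### `Btab` under cons -/

lemma foldr_max_le (l : List ℕ) (m : ℕ) (h : ∀ x ∈ l, x ≤ m) : l.foldr max 0 ≤ m := by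
  induction l with
  | nil => simp
  | cons a t ih =>
    simp only [List.foldr_cons]
    have h1 := h a (by simp)
    have h2 := ih (fun x hx => h x (by simp [hx]))
    omega

lemma le_foldr_max (l : List ℕ) (x : ℕ) (h : x ∈ l) : x ≤ l.foldr max 0 := by
  induction l with
  | nil => simp at h
  | cons a t ih =>
    simp only [List.foldr_cons]
    rcases List.mem_cons.1 h with rfl | h1
    · omega
    · have := ih h1; omega

lemma numRows_eq_count_one {w : List ℕ} (hw : ReverseLattice w) {M : ℕ} (hM : 1 ≤ M) :
    numRows w M = w.count 1 := by
  unfold numRows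
  apply Nat.le_antisymm
  · apply foldr_max_le
    intro x hx
    simp only [List.mem_map, List.mem_range] at hx
    obtain ⟨b0, _, rfl⟩ := hx
    exact rl_counts_dec hw (by omega) (by omega)
  · apply le_foldr_max
    simp only [List.mem_map, List.mem_range]
    exact ⟨0, by omega, rfl⟩

lemma filter_range_lt (a M : ℕ) (h : a ≤ M) :
    (List.range M).filter (fun x => decide (x < a)) = List.range a := by
  obtain ⟨d, rfl⟩ : ∃ d, M = a + d := ⟨M - a, by omega⟩
  rw [List.range_add, List.filter_append]
  have h1 : (List.range a).filter (fun x => decide (x < a)) = List.range a := by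
    apply List.filter_eq_self.2
    intro x hx
    simpa using List.mem_range.1 hx
  have h2 : ((List.range d).map (a + ·)).filter (fun x => decide (x < a)) = [] := by
    apply List.filter_eq_nil_iff.2
    intro x hx
    simp only [List.mem_map] at hx
    obtain ⟨y, _, rfl⟩ := hx
    simp
  rw [h1, h2, List.append_nil]

lemma count_cons_letter (a b : ℕ) (w' : List ℕ) :
    (a :: w').count b = w'.count b + (if b = a then 1 else 0) := by
  rw [List.count_cons]
  by_cases h : b = a
  · subst h; simp
  · simp [h, Ne.symm h]

lemma posL_length_cons (a b : ℕ) (w' : List ℕ) :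
    (posL b (a :: w')).length = w'.count b + (if b = a then 1 else 0) := by
  rw [length_posL, count_cons_letter]

lemma colFun_cons (a : ℕ) (w' : List ℕ) (m b0 : ℕ) (hm : 1 ≤ m)
    (hle : m ≤ w'.count (b0 + 1)) :
    colFun (a :: w') m b0 = colFun w' m b0 + 1 := by
  unfold colFun
  by_cases h : a = b0 + 1
  · rw [show posL (b0 + 1) (a :: w') = 1 :: (posL (b0 + 1) w').map (· + 1) from by
      simp [posL, h]]
    simp only [List.length_cons, List.length_map, length_posL]
    have hidx : w'.count (b0 + 1) + 1 - m = (w'.count (b0 + 1) - m) + 1 := by omega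
    rw [hidx, List.getD_cons_succ, getD_map_succ _ _ (by rw [length_posL]; omega)]
  · rw [show posL (b0 + 1) (a :: w') = (posL (b0 + 1) w').map (· + 1) from by
      simp [posL, h]]
    simp only [List.length_map, length_posL]
    rw [getD_map_succ _ _ (by rw [length_posL]; omega)]

lemma colFun_top (a : ℕ) (w' : List ℕ) (ha : 1 ≤ a) :
    colFun (a :: w') (w'.count a + 1) (a - 1) = 1 := by
  unfold colFun
  have h1 : a - 1 + 1 = a := by omega
  rw [h1]
  rw [show posL a (a :: w') = 1 :: (posL a w').map (· + 1) from by simp [posL]]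
  simp [length_posL]

/-- In the rows at heights `> w'.count a`, letters `≥ a` are absent. -/
lemma filter_high_w' {a : ℕ} {w' : List ℕ} (hw : ReverseLattice (a :: w')) {M : ℕ}
    (ha1 : 1 ≤ a) (haM : a ≤ M) {m : ℕ} (hm : w'.count a < m)
    (hmlow : ∀ b0, b0 + 1 < a → m ≤ w'.count (b0 + 1)) :
    (List.range M).filter (fun b0 => decide (m ≤ (posL (b0 + 1) w').length)) =
      List.range (a - 1) := by
  have hw' := rl_tail hw
  rw [← filter_range_lt (a - 1) M (by omega)]
  apply List.filter_congr
  intro b0 _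
  simp only [decide_eq_decide, length_posL]
  constructor
  · intro hcount
    by_contra hb0
    have hge : a ≤ b0 + 1 := by omega
    have := rl_counts_dec hw' ha1 hge
    omega
  · intro hb0
    exact hmlow b0 (by omega)

lemma count_w_lower {a : ℕ} {w' : List ℕ} (hw : ReverseLattice (a :: w')) (ha1 : 1 ≤ a) :
    ∀ b0, b0 + 1 < a → w'.count a + 1 ≤ w'.count (b0 + 1) := by
  intro b0 hb0
  have h1 := rl_counts_dec hw (b := b0 + 1) (c := a) (by omega) (by omega)
  have h2 : (a :: w').count a = w'.count a + 1 := by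
    rw [count_cons_letter]; simp
  have h3 : (a :: w').count (b0 + 1) = w'.count (b0 + 1) := by
    rw [count_cons_letter, if_neg (by omega)]
    omega
  omega

lemma rowB_cons {a : ℕ} {w' : List ℕ} (hw : ReverseLattice (a :: w')) {M : ℕ}
    (ha1 : 1 ≤ a) (haM : a ≤ M) (m : ℕ) (hm : 1 ≤ m) :
    rowB (a :: w') M m = (rowB w' M m).map (· + 1) ++
      (if m = w'.count a + 1 then [1] else []) := by
  have hw' := rl_tail hw
  by_cases hj : m = w'.count a + 1
  · subst hj
    rw [if_pos rfl]
    unfold rowB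
    -- LHS filter = range a
    have hfL : (List.range M).filter
        (fun b0 => decide (w'.count a + 1 ≤ (posL (b0 + 1) (a :: w')).length)) =
        List.range a := by
      rw [← filter_range_lt a M haM]
      apply List.filter_congr
      intro b0 _
      simp only [decide_eq_decide, length_posL, count_cons_letter]
      constructor
      · intro hcount
        by_contra hb0
        have hge : a ≤ b0 + 1 := by omega
        rw [if_neg (by omega)] at hcount
        have := rl_counts_dec hw' ha1 hge
        omega
      · intro hb0
        by_cases he : b0 + 1 = a
        · rw [if_pos he, he]
        · rw [if_neg he]
          have := count_w_lower hw ha1 b0 (by omega)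
          omega
    have hfR : (List.range M).filter
        (fun b0 => decide (w'.count a + 1 ≤ (posL (b0 + 1) w').length)) =
        List.range (a - 1) :=
      filter_high_w' hw ha1 haM (by omega) (fun b0 hb0 => count_w_lower hw ha1 b0 hb0)
    rw [hfL, hfR]
    have hsplit : List.range a = List.range (a - 1) ++ [a - 1] := by
      have : a = (a - 1) + 1 := by omega
      rw [this, List.range_succ]
      congr 2 <;> omega
    rw [hsplit, List.map_append, List.map_map]
    congr 1
    · apply List.map_congr_left
      intro b0 hb0
      have hb0a : b0 + 1 < a := by
        have := List.mem_range.1 hb0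
        omega
      have := count_w_lower hw ha1 b0 hb0a
      simp only [Function.comp_apply]
      rw [colFun_cons a w' _ b0 (by omega) (by omega)]
    · simp only [List.map_cons, List.map_nil]
      rw [colFun_top a w' ha1]
  · rw [if_neg hj, List.append_nil]
    unfold rowB
    have hfilter : (List.range M).filter
        (fun b0 => decide (m ≤ (posL (b0 + 1) (a :: w')).length)) =
        (List.range M).filter
        (fun b0 => decide (m ≤ (posL (b0 + 1) w').length)) := by
      apply List.filter_congr
      intro b0 _
      simp only [decide_eq_decide, length_posL, count_cons_letter]
      by_cases he : b0 + 1 = a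
      · rw [if_pos he, he]
        omega
      · rw [if_neg he]
        omega
    rw [hfilter, List.map_map]
    apply List.map_congr_left
    intro b0 hb0
    have hmem := List.mem_filter.1 hb0
    simp only [decide_eq_true_eq, length_posL] at hmem
    simp only [Function.comp_apply]
    rw [colFun_cons a w' m b0 hm hmem.2]

lemma numRows_cons {a : ℕ} {w' : List ℕ} (hw : ReverseLattice (a :: w')) {M : ℕ}
    (ha1 : 1 ≤ a) (haM : a ≤ M) :
    numRows (a :: w') M = numRows w' M + (if a = 1 then 1 else 0) := by
  rw [numRows_eq_count_one hw (by omega), numRows_eq_count_one (rl_tail hw) (by omega),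
    count_cons_letter]
  by_cases h : a = 1
  · simp [h]
  · rw [if_neg (fun hh => h hh.symm), if_neg h]

lemma range_split_map {α : Type*} (G : ℕ → α) (j N : ℕ) (h1 : 1 ≤ j) (h2 : j ≤ N) :
    (List.range N).map G = (List.range (j - 1)).map G ++
      G (j - 1) :: (List.range (N - j)).map (fun i => G (j + i)) := by
  have hN : N = (j - 1) + ((N - j) + 1) := by omega
  have hstep : (List.range N).map G = (List.range ((j - 1) + ((N - j) + 1))).map G := by
    rw [← hN]
  rw [hstep, List.range_add, List.map_append]
  congr 1
  rw [List.map_map, List.range_succ_eq_map, List.map_cons, List.map_map]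
  congr 1
  apply List.map_congr_left
  intro i _
  show G (j - 1 + (i + 1)) = G (j + i)
  congr 1
  omega

lemma length_rowB (w' : List ℕ) (M m : ℕ) :
    (rowB w' M m).length =
      ((List.range M).filter (fun b0 => decide (m ≤ (posL (b0 + 1) w').length))).length := by
  unfold rowB
  rw [List.length_map]

lemma rowB_len_ge {a : ℕ} {w' : List ℕ} (hw : ReverseLattice (a :: w')) {M : ℕ}
    (ha1 : 1 ≤ a) (haM : a ≤ M) {m : ℕ} (hm : 1 ≤ m) (hma : m ≤ w'.count a) :
    a ≤ (rowB w' M m).length := by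
  rw [length_rowB]
  have h1 : (List.range a).length ≤ ((List.range M).filter
      (fun b0 => decide (m ≤ (posL (b0 + 1) w').length))).length := by
    rw [← filter_range_lt a M haM]
    rw [← List.countP_eq_length_filter, ← List.countP_eq_length_filter]
    apply List.countP_mono_left
    intro b0 hb0
    simp only [decide_eq_true_eq, length_posL]
    intro hlt
    by_cases he : b0 + 1 = a
    · rw [he]; omega
    · have := count_w_lower hw ha1 b0 (by omega)
      omega
  simpa using h1

lemma rowB_ne_nil {w' : List ℕ} {M m : ℕ} (hM : 1 ≤ M) (hm : 1 ≤ m)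
    (hcount : m ≤ w'.count 1) : rowB w' M m ≠ [] := by
  unfold rowB
  apply List.ne_nil_of_mem (a := colFun w' m 0)
  apply List.mem_map_of_mem
  rw [List.mem_filter]
  constructor
  · exact List.mem_range.2 (by omega)
  · simp only [decide_eq_true_eq, length_posL, Nat.zero_add]
    omega

lemma Btab_cons {a : ℕ} {w' : List ℕ} (hw : ReverseLattice (a :: w')) {M : ℕ}
    (ha1 : 1 ≤ a) (haM : a ≤ M) :
    Btab (a :: w') M = addBoxCol a 1 (incT (Btab w' M)) := by
  have hw' := rl_tail hw
  have hN'count : numRows w' M = w'.count 1 := numRows_eq_count_one hw' (by omega)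
  have hinc : incT (Btab w' M) =
      (List.range (numRows w' M)).map (fun m0 => (rowB w' M (m0 + 1)).map (· + 1)) := by
    unfold incT Btab
    rw [List.map_map]
    rfl
  by_cases ha : a = 1
  · subst ha
    have hN : numRows (1 :: w') M = numRows w' M + 1 := by
      rw [numRows_cons hw (by omega) haM]
      simp
    rw [hinc]
    unfold Btab
    rw [hN, List.range_succ, List.map_append, List.map_cons, List.map_nil]
    have hrows : (List.range (numRows w' M)).map (fun m0 => rowB (1 :: w') M (m0 + 1)) =
        (List.range (numRows w' M)).map (fun m0 => (rowB w' M (m0 + 1)).map (· + 1)) := by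
      apply List.map_congr_left
      intro m0 hm0
      have hm0' := List.mem_range.1 hm0
      rw [rowB_cons hw (by omega) haM (m0 + 1) (by omega)]
      rw [if_neg (by omega), List.append_nil]
    have htop : rowB (1 :: w') M (numRows w' M + 1) = [1] := by
      rw [rowB_cons hw (by omega) haM _ (by omega), if_pos (by omega)]
      rw [rowB_nil w' (by omega), List.map_nil, List.nil_append]
    rw [hrows, htop]
    rw [addBoxCol_end 1 1 _ (by
      intro r hr
      simp only [List.mem_map, List.mem_range] at hr
      obtain ⟨m0, hm0, rfl⟩ := hr
      have hne := rowB_ne_nil (w' := w') (M := M) (m := m0 + 1) (by omega) (by omega)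
        (by omega)
      simp only [List.length_map]
      intro hcon
      apply hne
      have : (rowB w' M (m0 + 1)).length = 0 := by omega
      exact List.length_eq_zero_iff.1 this)]
  · -- a ≥ 2
    have ha2 : 2 ≤ a := by omega
    set j := w'.count a + 1 with hjdef
    have hjN : j ≤ numRows w' M := by
      have h1 := rl_counts_dec hw (b := 1) (c := a) (by omega) (by omega)
      rw [count_cons_letter, count_cons_letter] at h1
      rw [if_pos rfl, if_neg (by omega)] at h1
      omega
    have hN : numRows (a :: w') M = numRows w' M := by
      rw [numRows_cons hw ha1 haM, if_neg ha]
      omega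
    rw [hinc]
    unfold Btab
    rw [hN]
    rw [range_split_map (fun m0 => rowB (a :: w') M (m0 + 1)) j (numRows w' M)
      (by omega) hjN]
    rw [range_split_map (fun m0 => (rowB w' M (m0 + 1)).map (· + 1)) j (numRows w' M)
      (by omega) hjN]
    rw [addBoxCol_mid a 1 _ _ _ ?hpre ?hlen]
    case hpre =>
      intro r hr
      simp only [List.mem_map, List.mem_range] at hr
      obtain ⟨m0, hm0, rfl⟩ := hr
      have hge : a ≤ (rowB w' M (m0 + 1)).length :=
        rowB_len_ge hw ha1 haM (by omega) (by omega)
      simp only [List.length_map]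
      omega
    case hlen =>
      have hfR : (List.range M).filter
          (fun b0 => decide (j ≤ (posL (b0 + 1) w').length)) = List.range (a - 1) :=
        filter_high_w' hw ha1 haM (by omega) (fun b0 hb0 => count_w_lower hw ha1 b0 hb0)
      have h1 : j - 1 + 1 = j := by omega
      rw [List.length_map, length_rowB, h1, hfR, List.length_range]
      omega
    congr 1
    · apply List.map_congr_left
      intro m0 hm0
      have hm0' := List.mem_range.1 hm0
      rw [rowB_cons hw ha1 haM (m0 + 1) (by omega), if_neg (by omega), List.append_nil]
    · congr 1
      · have h1 : j - 1 + 1 = j := by omega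
        rw [rowB_cons hw ha1 haM (j - 1 + 1) (by omega), h1, if_pos rfl]
      · apply List.map_congr_left
        intro i _
        rw [rowB_cons hw ha1 haM (j + i + 1) (by omega), if_neg (by omega), List.append_nil]

lemma numRows_nil (M : ℕ) : numRows [] M = 0 := by
  unfold numRows
  apply Nat.le_antisymm _ (by omega)
  apply foldr_max_le
  intro x hx
  simp only [List.mem_map] at hx
  obtain ⟨b0, _, rfl⟩ := hx
  simp

lemma TwTab_eq_Btab (M : ℕ) : ∀ (w : List ℕ), ReverseLattice w → (∀ x ∈ w, x ≤ M) →
    TwTab w = Btab w M := by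
  intro w
  induction w with
  | nil =>
    intro _ _
    rw [show TwTab [] = [] from rfl]
    unfold Btab
    rw [numRows_nil]
    rfl
  | cons a w' ih =>
    intro hw hbound
    have ha1 : 1 ≤ a := hw.1 a (by simp)
    have haM : a ≤ M := hbound a (by simp)
    rw [TwTab_cons, ih (rl_tail hw) (fun x hx => hbound x (by simp [hx])),
      Btab_cons hw ha1 haM]


/-- Let `w = i_n ⋯ i_1` be a reverse lattice word (read left to right) and
`σ = std(w)`.  Then `T_w = P(σ⁻¹)`, the insertion tableau of `σ⁻¹` under the
variant Robinson–Schensted algorithm. -/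
theorem Tw_eq_insertion_tableau (w : List ℕ) (hw : ReverseLattice w) :
    TwTab w = PTab (invList (stdList w)) := by
  have hpos : ∀ x ∈ w, 0 < x := hw.1
  have hbound : ∀ x ∈ w, x ≤ w.length := fun x hx => rl_letter_le hw hx
  rw [PTab_eq_foldIns, invList_stdList w w.length hpos hbound,
    foldIns_blocks hw w.length, TwTab_eq_Btab w.length w hw hbound]

end CompJdt
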